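/- Let μ* be a probability measure on a measurable space, and suppose S₁,…,S_K, S_{K+1} is a measurable partition of the support of μ*. Let G₁,…,G_K be disjoint measurable sets forming a partition of a set containing supp(μ*), such that for each k = 1,…,K: supp(μ*) ∩ S_k ⊆ G_k and μ*(G_k) ≤ μ*(S_k) + μ*(S_{K+1}). Define the per-cluster F-scores F(G_k) = 2 max_{1≤j≤K} μ*(G_k ∩ S_j)/(μ*(G_k) + μ*(S_j)) and the micro-averaged F-score 𝓕 = Σ_k μ*(G_k) F(G_k) / μ*(∪_k G_k). Then 𝓕 ≥ 1 − μ*(S_{K+1}) / (2 min_{1≤k≤K} μ*(S_k)). -/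

import Mathlib

open MeasureTheory Metric

/-- The support of a measure: points all of whose closed balls have positive measure. -/
def msupport {X : Type*} [MeasurableSpace X] [PseudoMetricSpace X] (μ : Measure X) : Set X :=
  {x | ∀ r : ℝ, 0 < r → 0 < μ (Metric.closedBall x r)}

lemma msupport_compl_null {q : ℕ} (μ : Measure (Fin q → ℝ)) :
    μ (msupport μ)ᶜ = 0 := by
  apply measure_null_of_locally_null
  intro x hx
  simp only [msupport, Set.mem_compl_iff, Set.mem_setOf_eq, not_forall] at hx
  push_neg at hx
  obtain ⟨r, hr, hr0⟩ := hx
  exact ⟨Metric.closedBall x r,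
    mem_nhdsWithin_of_mem_nhds (Metric.closedBall_mem_nhds x hr),
    le_antisymm hr0 zero_le⟩

/-- lower bound on the micro-averaged F-score of clusters G_k
containing the in-support parts of the ground-truth sets S_k. -/
theorem stmt7 (q K : ℕ) (hK : 0 < K)
    (μ : Measure (Fin q → ℝ)) [IsProbabilityMeasure μ]
    (S : Fin (K + 1) → Set (Fin q → ℝ)) (G : Fin K → Set (Fin q → ℝ))
    (hSmeas : ∀ k, MeasurableSet (S k)) (hGmeas : ∀ k, MeasurableSet (G k))
    (hSdisj : Pairwise (Function.onFun Disjoint S))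
    (hSunion : (⋃ k, S k) = msupport μ)
    (hGdisj : Pairwise (Function.onFun Disjoint G))
    (hGcover : msupport μ ⊆ ⋃ k, G k)
    (hSk : ∀ k : Fin K, msupport μ ∩ S k.castSucc ⊆ G k)
    (hGk : ∀ k : Fin K,
      (μ (G k)).toReal ≤ (μ (S k.castSucc)).toReal + (μ (S (Fin.last K))).toReal)
    (hSpos : ∀ k : Fin K, 0 < (μ (S k.castSucc)).toReal) :
    1 - (μ (S (Fin.last K))).toReal / (2 * ⨅ k : Fin K, (μ (S k.castSucc)).toReal) ≤
      (∑ k : Fin K, (μ (G k)).toReal *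
        (2 * ⨆ j : Fin K, (μ (G k ∩ S j.castSucc)).toReal /
          ((μ (G k)).toReal + (μ (S j.castSucc)).toReal))) / (μ (⋃ k, G k)).toReal := by
  have hnull := msupport_compl_null μ
  haveI : Nonempty (Fin K) := ⟨⟨0, hK⟩⟩
  set L := (μ (S (Fin.last K))).toReal with hL
  have hLnn : 0 ≤ L := ENNReal.toReal_nonneg
  set a : Fin K → ℝ := fun k => (μ (S k.castSucc)).toReal with ha
  set m : ℝ := ⨅ k, a k with hm
  obtain ⟨k0, hk0⟩ := Finite.exists_min a
  have hma : ∀ k, m ≤ a k := fun k => ciInf_le (Finite.bddBelow_range a) k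
  have hm0 : 0 < m := lt_of_lt_of_le (hSpos k0) (le_ciInf hk0)
  -- μ (⋃ G) = 1
  have hcover1 : μ (⋃ k, G k) = 1 := by
    have hsub : (Set.univ : Set (Fin q → ℝ)) ⊆ (msupport μ)ᶜ ∪ ⋃ k, G k := by
      intro x _
      by_cases hx : x ∈ msupport μ
      · exact Or.inr (hGcover hx)
      · exact Or.inl hx
    have h2 : (1 : ENNReal) ≤ μ (⋃ k, G k) := by
      calc (1 : ENNReal) = μ Set.univ := (measure_univ).symm
        _ ≤ μ ((msupport μ)ᶜ ∪ ⋃ k, G k) := measure_mono hsub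
        _ ≤ μ (msupport μ)ᶜ + μ (⋃ k, G k) := measure_union_le _ _
        _ = μ (⋃ k, G k) := by rw [hnull, zero_add]
    exact le_antisymm prob_le_one h2
  have hsum : ∑ k : Fin K, (μ (G k)).toReal = 1 := by
    have h1 : μ (⋃ k, G k) = ∑' k, μ (G k) := measure_iUnion hGdisj hGmeas
    rw [hcover1, tsum_fintype] at h1
    calc ∑ k : Fin K, (μ (G k)).toReal
        = (∑ k : Fin K, μ (G k)).toReal :=
          (ENNReal.toReal_sum (fun k _ => measure_ne_top μ _)).symm
      _ = 1 := by rw [← h1]; simp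
  -- μ(S k) ≤ μ(G k ∩ S k)
  have hSG : ∀ k : Fin K, a k ≤ (μ (G k ∩ S k.castSucc)).toReal := by
    intro k
    have hsub : S k.castSucc ⊆ (msupport μ)ᶜ ∪ (G k ∩ S k.castSucc) := by
      intro x hx
      by_cases h : x ∈ msupport μ
      · exact Or.inr ⟨hSk k ⟨h, hx⟩, hx⟩
      · exact Or.inl h
    have h1 : μ (S k.castSucc) ≤ μ (G k ∩ S k.castSucc) := by
      calc μ (S k.castSucc) ≤ μ ((msupport μ)ᶜ ∪ (G k ∩ S k.castSucc)) := measure_mono hsub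
        _ ≤ μ (msupport μ)ᶜ + μ (G k ∩ S k.castSucc) := measure_union_le _ _
        _ = μ (G k ∩ S k.castSucc) := by rw [hnull, zero_add]
    exact ENNReal.toReal_mono (measure_ne_top μ _) h1
  -- per-cluster bound
  have hterm : ∀ k : Fin K,
      (μ (G k)).toReal * (1 - L / (2 * m)) ≤
      (μ (G k)).toReal * (2 * ⨆ j : Fin K, (μ (G k ∩ S j.castSucc)).toReal /
          ((μ (G k)).toReal + (μ (S j.castSucc)).toReal)) := by
    intro k
    set g := (μ (G k)).toReal with hg
    have hgnn : 0 ≤ g := ENNReal.toReal_nonneg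
    refine mul_le_mul_of_nonneg_left ?_ hgnn
    have hstep1 : a k / (2 * a k + L) ≤
        (μ (G k ∩ S k.castSucc)).toReal / (g + a k) := by
      apply div_le_div₀ ((hSpos k).le.trans (hSG k)) (hSG k)
        (add_pos_of_nonneg_of_pos hgnn (hSpos k))
      have := hGk k
      linarith [this]
    have hstep2 : (μ (G k ∩ S k.castSucc)).toReal / (g + a k) ≤
        ⨆ j : Fin K, (μ (G k ∩ S j.castSucc)).toReal / (g + a j) := by
      exact le_ciSup (f := fun j : Fin K => (μ (G k ∩ S j.castSucc)).toReal / (g + a j)) (Finite.bddAbove_range _) k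
    have hdenpos : 0 < 2 * a k + L := by have := hSpos k; linarith
    have heq : 2 * (a k / (2 * a k + L)) = 1 - L / (2 * a k + L) := by
      field_simp
      ring
    have hmono : L / (2 * a k + L) ≤ L / (2 * m) := by
      apply div_le_div_of_nonneg_left hLnn (by linarith)
      have := hma k; linarith
    calc 1 - L / (2 * m) ≤ 1 - L / (2 * a k + L) := by linarith
      _ = 2 * (a k / (2 * a k + L)) := heq.symm
      _ ≤ 2 * ((μ (G k ∩ S k.castSucc)).toReal / (g + a k)) := by linarith
      _ ≤ 2 * ⨆ j : Fin K, (μ (G k ∩ S j.castSucc)).toReal / (g + a j) := by linarith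
  -- combine
  rw [hcover1]
  simp only [ENNReal.toReal_one, div_one]
  calc 1 - L / (2 * m)
      = (∑ k : Fin K, (μ (G k)).toReal) * (1 - L / (2 * m)) := by rw [hsum, one_mul]
    _ = ∑ k : Fin K, (μ (G k)).toReal * (1 - L / (2 * m)) := by rw [Finset.sum_mul]
    _ ≤ _ := Finset.sum_le_sum fun k _ => hterm k
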